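/- arXiv:2111.00733 — 7 statements merged into one kernel-verified Lean document; each statement's English description precedes it below -/
import Mathlib

section
/- Let f : E → F be a homomorphism of locally free sheaves of rank r on a scheme X such that the induced map Λ^r f : Λ^r E → Λ^r F on top exterior powers is injective. Then f is injective. -/
/-- Any alternating map evaluated at a family `v` equals `e.det v` times its value on the
basis `e`. -/
private lemma su12_aux_det_smul {R N P : Type*} [CommRing R]
    [AddCommGroup N] [Module R N] [AddCommGroup P] [Module R P]
    {ι : Type*} [Fintype ι] [DecidableEq ι] (e : Module.Basis ι R N)
    (g : N [⋀^ι]→ₗ[R] P) (v : ι → N) :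
    g v = e.det v • g e := by
  have hg : g = (LinearMap.toSpanSingleton R P (g e)).compAlternatingMap e.det := by
    refine e.ext_alternating fun i h => ?_
    have hb : Function.Bijective i := Finite.injective_iff_bijective.1 h
    let σ : Equiv.Perm ι := Equiv.ofBijective i hb
    have : (fun j => e (i j)) = e ∘ σ := rfl
    rw [this, AlternatingMap.map_perm, AlternatingMap.map_perm]
    simp [Module.Basis.det_self, LinearMap.toSpanSingleton_apply]
  rw [hg]
  simp [LinearMap.toSpanSingleton_apply, Module.Basis.det_self]

theorem su12_exterior_power_injective_of_top_injective
    {R M N : Type*} [CommRing R]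
    [AddCommGroup M] [Module R M] [AddCommGroup N] [Module R N]
    (r : ℕ) (bM : Module.Basis (Fin r) R M) (bN : Module.Basis (Fin r) R N)
    (f : M →ₗ[R] N)
    (hΛ : Set.InjOn (ExteriorAlgebra.map f) (⋀[R]^r M : Submodule R (ExteriorAlgebra R M))) :
    Function.Injective f := by
  classical
  set d : R := bN.det (f ∘ bM) with hd
  -- `d` is a non-zero-divisor
  have hreg : ∀ c : R, c * d = 0 → c = 0 := by
    intro c hc
    have hω : ExteriorAlgebra.ιMulti R r (M := M) bM ∈
        (⋀[R]^r M : Submodule R (ExteriorAlgebra R M)) :=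
      ExteriorAlgebra.ιMulti_range R r (Set.mem_range_self _)
    have hmem1 : c • ExteriorAlgebra.ιMulti R r (M := M) bM ∈
        (⋀[R]^r M : Submodule R (ExteriorAlgebra R M)) := Submodule.smul_mem _ _ hω
    have hmem2 : (0 : ExteriorAlgebra R M) ∈
        (⋀[R]^r M : Submodule R (ExteriorAlgebra R M)) := Submodule.zero_mem _
    have hmap : ExteriorAlgebra.map f (ExteriorAlgebra.ιMulti R r (M := M) bM)
        = d • ExteriorAlgebra.ιMulti R r (M := N) bN := by
      rw [ExteriorAlgebra.map_apply_ιMulti, su12_aux_det_smul bN _ (f ∘ bM)]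
    have heq : ExteriorAlgebra.map f (c • ExteriorAlgebra.ιMulti R r (M := M) bM)
        = ExteriorAlgebra.map f (0 : ExteriorAlgebra R M) := by
      rw [map_smul, hmap, smul_smul, hc, zero_smul, map_zero]
    have h0 : c • ExteriorAlgebra.ιMulti R r (M := M) bM = 0 := hΛ hmem1 hmem2 heq
    -- evaluate with `liftAlternating` at the family which is `bM.det` in degree `r`
    have := congrArg (ExteriorAlgebra.liftAlternating
      (R := R) (M := M) (N := R) (Function.update (fun _ => 0) r bM.det)) h0
    rw [map_smul, map_zero, ExteriorAlgebra.liftAlternating_apply_ιMulti,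
      Function.update_self, Module.Basis.det_self, smul_eq_mul, mul_one] at this
    exact this
  -- now deduce injectivity via the adjugate
  rw [← LinearMap.ker_eq_bot, LinearMap.ker_eq_bot']
  intro x hx
  set A := LinearMap.toMatrix bM bN f with hA
  have hdet : A.det = d := by
    rw [hd, Module.Basis.det_apply]
    congr 1
    ext i j
    rw [Module.Basis.toMatrix_apply, hA, LinearMap.toMatrix_apply, Function.comp_apply]
  have hmv : A.mulVec (bM.repr x) = 0 := by
    rw [hA, LinearMap.toMatrix_mulVec_repr, hx, map_zero]
    rfl
  have hrepr : ∀ i, (bM.repr x) i = 0 := by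
    intro i
    have h1 : (A.adjugate * A).mulVec (bM.repr x) = 0 := by
      rw [← Matrix.mulVec_mulVec, hmv, Matrix.mulVec_zero]
    rw [Matrix.adjugate_mul] at h1
    have h2 : A.det * (bM.repr x) i = 0 := by
      have := congrFun h1 i
      simpa [Matrix.mulVec, dotProduct, Matrix.smul_apply, Matrix.one_apply,
        Finset.mul_sum, mul_ite] using this
    have h3 : (bM.repr x) i * d = 0 := by rw [← hdet, mul_comm]; exact h2
    exact hreg _ h3
  have : bM.repr x = 0 := by ext i; exact hrepr i
  have := congrArg bM.repr.symm this
  simpa using this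
end

section
/- Let R₀ be a discrete valuation ring over ℂ with uniformizer ζ, R₁ a commutative local ℂ-algebra, and R = R₀ ⊗_ℂ R₁. If φ ∈ End_R(R⊕R) is an R-linear endomorphism of R² with det φ = ζ ⊗ 1, then there exist P, Q ∈ Aut_R(R⊕R) such that P·φ·Q equals the diagonal matrix diag(1, ζ⊗1). -/
/-!
STATEMENT 1 (Smith normal form lemma).  `R₀` a DVR over `ℂ` with uniformizer `ζ`,
`R₁` a commutative local `ℂ`-algebra, `R = R₀ ⊗_ℂ R₁`.  If `φ ∈ End_R(R ⊕ R)`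
(a `2 × 2` matrix over `R`) has `det φ = ζ ⊗ 1`, then there are invertible
`P, Q` with `P · φ · Q = diag(1, ζ ⊗ 1)`.
The geometric context (`R₀ = O_{X,x}` on a smooth curve over `ℂ`, `R₁ = O_{S,s}`)
is recorded by the hypotheses that `ζ ⊗ 1` is a non-zero-divisor of `R` and that
the natural quotient map `R → R₁` (a ring map sending `1 ⊗ r` to `r`) has kernel
the principal ideal `(ζ ⊗ 1)`.
-/

open TensorProduct

/-- The main case of the Smith normal form lemma: the `(0,0)` entry of `φ`
is a unit modulo `ζ ⊗ 1`. -/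
lemma smith_aux_main
    (R₀ R₁ : Type*) [CommRing R₀] [CommRing R₁] [Algebra ℂ R₀] [Algebra ℂ R₁]
    (ζ : R₀)
    (ψ : (R₀ ⊗[ℂ] R₁) →+* R₁)
    (hψ : ∀ r : R₁, ψ ((1 : R₀) ⊗ₜ[ℂ] r) = r)
    (hker : RingHom.ker ψ = Ideal.span {ζ ⊗ₜ[ℂ] (1 : R₁)})
    (hnzd : (ζ ⊗ₜ[ℂ] (1 : R₁)) ∈ nonZeroDivisors (R₀ ⊗[ℂ] R₁))
    (φ : Matrix (Fin 2) (Fin 2) (R₀ ⊗[ℂ] R₁))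
    (hdet : φ.det = ζ ⊗ₜ[ℂ] (1 : R₁))
    (hunit : IsUnit (ψ (φ 0 0))) :
    ∃ P Q : Matrix (Fin 2) (Fin 2) (R₀ ⊗[ℂ] R₁),
      IsUnit P ∧ IsUnit Q ∧
      P * φ * Q = Matrix.diagonal ![1, ζ ⊗ₜ[ℂ] (1 : R₁)] := by
  set z : R₀ ⊗[ℂ] R₁ := ζ ⊗ₜ[ℂ] (1 : R₁) with hzdef
  have hzker : z ∈ RingHom.ker ψ := by
    rw [hker]; exact Ideal.subset_span rfl
  have hz0 : ψ z = 0 := hzker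
  have key : ∀ x : R₀ ⊗[ℂ] R₁, ψ x = 0 → ∃ y, x = y * z := by
    intro x hx
    have hx' : x ∈ Ideal.span {z} := by rw [← hker]; exact hx
    rcases Ideal.mem_span_singleton.mp hx' with ⟨y, hy⟩
    exact ⟨y, by rw [hy, mul_comm]⟩
  obtain ⟨u, hu⟩ := hunit
  have hdet2 : φ 0 0 * φ 1 1 - φ 0 1 * φ 1 0 = z := by
    rw [← hdet, Matrix.det_fin_two]
  set b' : R₀ ⊗[ℂ] R₁ := (1 : R₀) ⊗ₜ[ℂ] (ψ (φ 0 1) * ↑u⁻¹) with hb'def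
  set c' : R₀ ⊗[ℂ] R₁ := (1 : R₀) ⊗ₜ[ℂ] (ψ (φ 1 0) * ↑u⁻¹) with hc'def
  have hb0 : ψ (φ 0 1 - φ 0 0 * b') = 0 := by
    rw [map_sub, map_mul, hb'def, hψ, ← hu]
    rw [mul_comm (ψ (φ 0 1)) (↑u⁻¹ : R₁), ← mul_assoc]
    simp
  have hc0 : ψ (φ 1 0 - c' * φ 0 0) = 0 := by
    rw [map_sub, map_mul, hc'def, hψ, ← hu]
    rw [mul_assoc]
    simp
  obtain ⟨b₁, hb₁⟩ := key _ hb0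
  obtain ⟨c₁, hc₁⟩ := key _ hc0
  set d'' : R₀ ⊗[ℂ] R₁ :=
    φ 1 1 - c' * φ 0 1 - b' * φ 1 0 + b' * (c' * φ 0 0) with hd''def
  have hdet' : φ 0 0 * d'' = z * (1 + z * (b₁ * c₁)) := by
    rw [hd''def]
    linear_combination hdet2 + (φ 1 0 - c' * φ 0 0) * hb₁ + (b₁ * z) * hc₁
  have hd0 : ψ d'' = 0 := by
    have h := congrArg ψ hdet'
    rw [map_mul, map_mul, hz0, zero_mul, ← hu] at h
    exact u.isUnit.mul_right_eq_zero.mp h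
  obtain ⟨d₁, hd₁⟩ := key _ hd0
  have hkey : φ 0 0 * d₁ = 1 + z * (b₁ * c₁) := by
    rw [← mul_cancel_right_mem_nonZeroDivisors hnzd]
    rw [mul_assoc, ← hd₁, hdet']
    ring
  set F : Matrix (Fin 2) (Fin 2) (R₀ ⊗[ℂ] R₁) := Matrix.of ![![1, 0], ![-c', 1]] with hF
  set E : Matrix (Fin 2) (Fin 2) (R₀ ⊗[ℂ] R₁) := Matrix.of ![![1, -b'], ![0, 1]] with hE
  set U : Matrix (Fin 2) (Fin 2) (R₀ ⊗[ℂ] R₁) :=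
    Matrix.of ![![d₁, -b₁], ![-(z * c₁), φ 0 0]] with hU
  have hdetF : F.det = 1 := by simp [hF, Matrix.det_fin_two]
  have hdetE : E.det = 1 := by simp [hE, Matrix.det_fin_two]
  have hdetU : U.det = 1 := by
    rw [hU, Matrix.det_fin_two]
    simp only [Matrix.of_apply, Matrix.cons_val', Matrix.cons_val_zero, Matrix.cons_val_one,
      Matrix.head_cons, Matrix.empty_val', Matrix.cons_val_fin_one, Matrix.head_fin_const]
    linear_combination hkey
  refine ⟨U * F, E, ?_, ?_, ?_⟩
  · rw [Matrix.isUnit_iff_isUnit_det, Matrix.det_mul, hdetU, hdetF]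
    simp
  · rw [Matrix.isUnit_iff_isUnit_det, hdetE]; simp
  · ext i j
    fin_cases i <;> fin_cases j <;>
      simp only [Matrix.mul_apply, Fin.sum_univ_two, hF, hE, hU, Matrix.of_apply,
        Matrix.cons_val', Matrix.cons_val_zero, Matrix.cons_val_one, Matrix.head_cons,
        Matrix.empty_val', Matrix.cons_val_fin_one, Matrix.head_fin_const,
        Matrix.diagonal, Fin.mk_zero, Fin.mk_one, if_true,
        show ((0 : Fin 2) = 1) ↔ False from by decide,
        show ((1 : Fin 2) = 0) ↔ False from by decide, if_false]
    · linear_combination (-b₁) * hc₁ + hkey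
    · linear_combination d₁ * hb₁ + b₁ * hd''def - b₁ * hd₁
    · linear_combination (φ 0 0) * hc₁
    · linear_combination (-(z * c₁)) * hb₁ + z * hkey + (φ 0 0) * hd₁ - (φ 0 0) * hd''def

/-- Some entry of `φ` is a unit modulo `ζ ⊗ 1` (i.e. its image under `ψ` is a
unit of the local ring `R₁`). -/
lemma smith_aux_exists_unit_entry
    (R₀ R₁ : Type*) [CommRing R₀] [CommRing R₁] [IsLocalRing R₁]
    [Algebra ℂ R₀] [Algebra ℂ R₁]
    (ζ : R₀)
    (ψ : (R₀ ⊗[ℂ] R₁) →+* R₁)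
    (hψ : ∀ r : R₁, ψ ((1 : R₀) ⊗ₜ[ℂ] r) = r)
    (hker : RingHom.ker ψ = Ideal.span {ζ ⊗ₜ[ℂ] (1 : R₁)})
    (hnzd : (ζ ⊗ₜ[ℂ] (1 : R₁)) ∈ nonZeroDivisors (R₀ ⊗[ℂ] R₁))
    (φ : Matrix (Fin 2) (Fin 2) (R₀ ⊗[ℂ] R₁))
    (hdet : φ.det = ζ ⊗ₜ[ℂ] (1 : R₁)) :
    ∃ i j, IsUnit (ψ (φ i j)) := by
  set z : R₀ ⊗[ℂ] R₁ := ζ ⊗ₜ[ℂ] (1 : R₁) with hzdef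
  have hz0 : ψ z = 0 := by
    rw [← RingHom.mem_ker, hker]; exact Ideal.subset_span rfl
  have key : ∀ x : R₀ ⊗[ℂ] R₁, ψ x = 0 → ∃ y, x = y * z := by
    intro x hx
    have hx' : x ∈ Ideal.span {z} := by rw [← hker]; exact hx
    rcases Ideal.mem_span_singleton.mp hx' with ⟨y, hy⟩
    exact ⟨y, by rw [hy, mul_comm]⟩
  by_contra h
  push_neg at h
  have hm : ∀ i j, ψ (φ i j) ∈ IsLocalRing.maximalIdeal R₁ := fun i j =>
    (IsLocalRing.mem_maximalIdeal _).mpr (h i j)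
  have dec : ∀ i j, ∃ y, φ i j = y * z + (1 : R₀) ⊗ₜ[ℂ] ψ (φ i j) := by
    intro i j
    obtain ⟨y, hy⟩ := key (φ i j - (1 : R₀) ⊗ₜ[ℂ] ψ (φ i j))
      (by rw [map_sub, hψ, sub_self])
    exact ⟨y, by linear_combination hy⟩
  obtain ⟨a₁, ha⟩ := dec 0 0
  obtain ⟨b₁, hb⟩ := dec 0 1
  obtain ⟨c₁, hc⟩ := dec 1 0
  obtain ⟨d₁, hd⟩ := dec 1 1
  have hdet2 : φ 0 0 * φ 1 1 - φ 0 1 * φ 1 0 = z := by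
    rw [← hdet, Matrix.det_fin_two]
  have hψdet : ψ (φ 0 0) * ψ (φ 1 1) - ψ (φ 0 1) * ψ (φ 1 0) = 0 := by
    have h2 := congrArg ψ hdet2
    rw [map_sub, map_mul, map_mul, hz0] at h2
    exact h2
  have h1 : ((1:R₀) ⊗ₜ[ℂ] ψ (φ 0 0)) * ((1:R₀) ⊗ₜ[ℂ] ψ (φ 1 1))
      = (1:R₀) ⊗ₜ[ℂ] (ψ (φ 0 0) * ψ (φ 1 1)) := by
    rw [Algebra.TensorProduct.tmul_mul_tmul, one_mul]
  have h2 : ((1:R₀) ⊗ₜ[ℂ] ψ (φ 0 1)) * ((1:R₀) ⊗ₜ[ℂ] ψ (φ 1 0))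
      = (1:R₀) ⊗ₜ[ℂ] (ψ (φ 0 1) * ψ (φ 1 0)) := by
    rw [Algebra.TensorProduct.tmul_mul_tmul, one_mul]
  have h3 : (1:R₀) ⊗ₜ[ℂ] (ψ (φ 0 0) * ψ (φ 1 1))
      - (1:R₀) ⊗ₜ[ℂ] (ψ (φ 0 1) * ψ (φ 1 0)) = 0 := by
    rw [← TensorProduct.tmul_sub, hψdet, TensorProduct.tmul_zero]
  set Y : R₀ ⊗[ℂ] R₁ := z * (a₁ * d₁ - b₁ * c₁) + a₁ * ((1:R₀) ⊗ₜ[ℂ] ψ (φ 1 1))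
      + d₁ * ((1:R₀) ⊗ₜ[ℂ] ψ (φ 0 0)) - b₁ * ((1:R₀) ⊗ₜ[ℂ] ψ (φ 1 0))
      - c₁ * ((1:R₀) ⊗ₜ[ℂ] ψ (φ 0 1)) with hYdef
  have hzY : Y * z = 1 * z := by
    rw [hYdef]
    linear_combination hdet2 - h1 + h2 - h3 - (φ 1 1) * ha
      - (a₁ * z + (1:R₀) ⊗ₜ[ℂ] ψ (φ 0 0)) * hd + (φ 1 0) * hb
      + (b₁ * z + (1:R₀) ⊗ₜ[ℂ] ψ (φ 0 1)) * hc
  have hY1 : Y = 1 := (mul_cancel_right_mem_nonZeroDivisors hnzd).mp hzY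
  have hψY : ψ Y = 1 := by rw [hY1, map_one]
  rw [hYdef] at hψY
  simp only [map_add, map_sub, map_mul, hψ, hz0, zero_mul] at hψY
  have hmem : (1 : R₁) ∈ IsLocalRing.maximalIdeal R₁ := by
    rw [← hψY]
    refine Ideal.sub_mem _ (Ideal.sub_mem _ (Ideal.add_mem _ (Ideal.add_mem _
      (Ideal.zero_mem _) ?_) ?_) ?_) ?_
    · exact Ideal.mul_mem_left _ _ (hm 1 1)
    · exact Ideal.mul_mem_left _ _ (hm 0 0)
    · exact Ideal.mul_mem_left _ _ (hm 1 0)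
    · exact Ideal.mul_mem_left _ _ (hm 0 1)
  exact (mem_nonunits_iff.mp ((IsLocalRing.mem_maximalIdeal _).mp hmem)) isUnit_one

theorem smith_form_lemma
    (R₀ R₁ : Type*) [CommRing R₀] [IsDomain R₀] [IsDiscreteValuationRing R₀]
    [CommRing R₁] [IsLocalRing R₁]
    [Algebra ℂ R₀] [Algebra ℂ R₁]
    (ζ : R₀) (hζ : Irreducible ζ)
    (ψ : (R₀ ⊗[ℂ] R₁) →+* R₁)
    (hψ : ∀ r : R₁, ψ ((1 : R₀) ⊗ₜ[ℂ] r) = r)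
    (hker : RingHom.ker ψ = Ideal.span {ζ ⊗ₜ[ℂ] (1 : R₁)})
    (hnzd : (ζ ⊗ₜ[ℂ] (1 : R₁)) ∈ nonZeroDivisors (R₀ ⊗[ℂ] R₁))
    (φ : Matrix (Fin 2) (Fin 2) (R₀ ⊗[ℂ] R₁))
    (hdet : φ.det = ζ ⊗ₜ[ℂ] (1 : R₁)) :
    ∃ P Q : Matrix (Fin 2) (Fin 2) (R₀ ⊗[ℂ] R₁),
      IsUnit P ∧ IsUnit Q ∧
      P * φ * Q = Matrix.diagonal ![1, ζ ⊗ₜ[ℂ] (1 : R₁)] := by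
  have hex : ∃ i j, IsUnit (ψ (φ i j)) :=
    smith_aux_exists_unit_entry R₀ R₁ ζ ψ hψ hker hnzd φ hdet
  set S : Matrix (Fin 2) (Fin 2) (R₀ ⊗[ℂ] R₁) := Matrix.of ![![0, -1], ![1, 0]] with hS
  set S' : Matrix (Fin 2) (Fin 2) (R₀ ⊗[ℂ] R₁) := Matrix.of ![![0, 1], ![-1, 0]] with hS'
  have hdS : S.det = 1 := by simp [hS, Matrix.det_fin_two]
  have hdS' : S'.det = 1 := by simp [hS', Matrix.det_fin_two]
  have hSU : IsUnit S := by rw [Matrix.isUnit_iff_isUnit_det, hdS]; exact isUnit_one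
  have hS'U : IsUnit S' := by rw [Matrix.isUnit_iff_isUnit_det, hdS']; exact isUnit_one
  obtain ⟨i, j, hij⟩ := hex
  fin_cases i <;> fin_cases j
  · exact smith_aux_main R₀ R₁ ζ ψ hψ hker hnzd φ hdet hij
  · have hdet' : (φ * S).det = ζ ⊗ₜ[ℂ] (1 : R₁) := by
      rw [Matrix.det_mul, hdS, mul_one, hdet]
    have h00 : (φ * S) 0 0 = φ 0 1 := by
      simp [hS, Matrix.mul_apply, Fin.sum_univ_two]
    obtain ⟨P, Q, hP, hQ, hPQ⟩ :=
      smith_aux_main R₀ R₁ ζ ψ hψ hker hnzd (φ * S) hdet' (by rw [h00]; exact hij)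
    refine ⟨P, S * Q, hP, hSU.mul hQ, ?_⟩
    rw [← Matrix.mul_assoc, Matrix.mul_assoc P φ S, hPQ]
  · have hdet' : (S' * φ).det = ζ ⊗ₜ[ℂ] (1 : R₁) := by
      rw [Matrix.det_mul, hdS', one_mul, hdet]
    have h00 : (S' * φ) 0 0 = φ 1 0 := by
      simp [hS', Matrix.mul_apply, Fin.sum_univ_two]
    obtain ⟨P, Q, hP, hQ, hPQ⟩ :=
      smith_aux_main R₀ R₁ ζ ψ hψ hker hnzd (S' * φ) hdet' (by rw [h00]; exact hij)
    refine ⟨P * S', Q, hP.mul hS'U, hQ, ?_⟩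
    rw [Matrix.mul_assoc P S' φ, hPQ]
  · have hdet' : (S' * φ * S).det = ζ ⊗ₜ[ℂ] (1 : R₁) := by
      rw [Matrix.det_mul, Matrix.det_mul, hdS', hdS, one_mul, mul_one, hdet]
    have h00 : (S' * φ * S) 0 0 = φ 1 1 := by
      simp [hS, hS', Matrix.mul_apply, Matrix.vecMul, dotProduct, Fin.sum_univ_two]
    obtain ⟨P, Q, hP, hQ, hPQ⟩ :=
      smith_aux_main R₀ R₁ ζ ψ hψ hker hnzd (S' * φ * S) hdet' (by rw [h00]; exact hij)
    refine ⟨P * S', S * Q, hP.mul hS'U, hSU.mul hQ, ?_⟩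
    calc P * S' * φ * (S * Q) = P * (S' * φ * S) * Q := by
          simp only [Matrix.mul_assoc]
      _ = Matrix.diagonal ![1, ζ ⊗ₜ[ℂ] (1 : R₁)] := hPQ
end

section
/- Let R₀ be a DVR over ℂ with uniformizer ζ, R₁ a local ℂ-algebra, R = R₀ ⊗_ℂ R₁, and φ = (φᵢⱼ) a 2×2 matrix over R with determinant ζ⊗1. Writing φᵢⱼ = 1⊗aᵢⱼ + (ζ⊗1)bᵢⱼ with aᵢⱼ ∈ R₁, then a₁₁a₂₂ − a₁₂a₂₁ = 0 and at least one of the four elements aᵢⱼ is a unit in R₁. -/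
/-!
STATEMENT 2.  Setting of the Smith form lemma: `R₀` a DVR over `ℂ` with uniformizer
`ζ`, `R₁` a commutative local `ℂ`-algebra, `R = R₀ ⊗_ℂ R₁`, and `φ = (φᵢⱼ)` a
`2 × 2` matrix over `R` with `det φ = ζ ⊗ 1`.  Writing `φᵢⱼ = 1 ⊗ aᵢⱼ + (ζ ⊗ 1)·bᵢⱼ`
with `aᵢⱼ ∈ R₁`, one has `a₁₁a₂₂ − a₁₂a₂₁ = 0` and at least one of the four
elements `aᵢⱼ` is a unit in `R₁`.
-/

open TensorProduct

theorem det_residue_lemma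
    (R₀ R₁ : Type*) [CommRing R₀] [IsDomain R₀] [IsDiscreteValuationRing R₀]
    [CommRing R₁] [IsLocalRing R₁]
    [Algebra ℂ R₀] [Algebra ℂ R₁]
    (ζ : R₀) (hζ : Irreducible ζ)
    (ψ : (R₀ ⊗[ℂ] R₁) →+* R₁)
    (hψ : ∀ r : R₁, ψ ((1 : R₀) ⊗ₜ[ℂ] r) = r)
    (hker : RingHom.ker ψ = Ideal.span {ζ ⊗ₜ[ℂ] (1 : R₁)})
    (hnzd : (ζ ⊗ₜ[ℂ] (1 : R₁)) ∈ nonZeroDivisors (R₀ ⊗[ℂ] R₁))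
    (φ : Matrix (Fin 2) (Fin 2) (R₀ ⊗[ℂ] R₁))
    (hdet : φ.det = ζ ⊗ₜ[ℂ] (1 : R₁))
    (a : Fin 2 → Fin 2 → R₁) (b : Fin 2 → Fin 2 → (R₀ ⊗[ℂ] R₁))
    (hab : ∀ i j, φ i j = (1 : R₀) ⊗ₜ[ℂ] (a i j) + (ζ ⊗ₜ[ℂ] (1 : R₁)) * b i j) :
    a 0 0 * a 1 1 - a 0 1 * a 1 0 = 0 ∧ ∃ i j, IsUnit (a i j) := by
  set z : R₀ ⊗[ℂ] R₁ := ζ ⊗ₜ[ℂ] (1 : R₁) with hzdef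
  have hzker : ψ z = 0 := by
    have hmem : z ∈ RingHom.ker ψ := by
      rw [hker]; exact Ideal.subset_span (Set.mem_singleton _)
    exact hmem
  have hψφ : ∀ i j, ψ (φ i j) = a i j := by
    intro i j
    rw [hab i j, map_add, map_mul, hzker, hψ, zero_mul, add_zero]
  have h1 : a 0 0 * a 1 1 - a 0 1 * a 1 0 = 0 := by
    have h := hdet
    rw [Matrix.det_fin_two] at h
    have h2 := congrArg ψ h
    simpa [map_sub, map_mul, hψφ, hzker] using h2
  refine ⟨h1, ?_⟩
  set c : R₀ ⊗[ℂ] R₁ :=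
    ((1 : R₀) ⊗ₜ[ℂ] a 0 0) * b 1 1 + b 0 0 * ((1 : R₀) ⊗ₜ[ℂ] a 1 1)
      + z * (b 0 0 * b 1 1)
      - (((1 : R₀) ⊗ₜ[ℂ] a 0 1) * b 1 0 + b 0 1 * ((1 : R₀) ⊗ₜ[ℂ] a 1 0)
        + z * (b 0 1 * b 1 0)) with hcdef
  have key : (1 : R₀) ⊗ₜ[ℂ] (a 0 0 * a 1 1) - (1 : R₀) ⊗ₜ[ℂ] (a 0 1 * a 1 0) = 0 := by
    rw [← TensorProduct.tmul_sub, h1, TensorProduct.tmul_zero]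
  have expand : φ.det =
      ((1 : R₀) ⊗ₜ[ℂ] (a 0 0 * a 1 1) - (1 : R₀) ⊗ₜ[ℂ] (a 0 1 * a 1 0)) + z * c := by
    rw [Matrix.det_fin_two, hab 0 0, hab 0 1, hab 1 0, hab 1 1, hcdef]
    have t1 : ((1 : R₀) ⊗ₜ[ℂ] a 0 0) * ((1 : R₀) ⊗ₜ[ℂ] a 1 1)
        = (1 : R₀) ⊗ₜ[ℂ] (a 0 0 * a 1 1) := by
      rw [Algebra.TensorProduct.tmul_mul_tmul, one_mul]
    have t2 : ((1 : R₀) ⊗ₜ[ℂ] a 0 1) * ((1 : R₀) ⊗ₜ[ℂ] a 1 0)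
        = (1 : R₀) ⊗ₜ[ℂ] (a 0 1 * a 1 0) := by
      rw [Algebra.TensorProduct.tmul_mul_tmul, one_mul]
    rw [← t1, ← t2]
    ring
  have hzc : z * c = z := by
    conv_rhs => rw [← hdet, expand, key, zero_add]
  have hc1 : c = 1 := by
    have h0 : (c - 1) * z = 0 := by
      have : z * c - z = 0 := by rw [hzc, sub_self]
      calc (c - 1) * z = z * c - z := by ring
        _ = 0 := this
    have := hnzd.2 (c - 1) h0
    exact sub_eq_zero.mp this
  have hψc : a 0 0 * ψ (b 1 1) + ψ (b 0 0) * a 1 1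
      - (a 0 1 * ψ (b 1 0) + ψ (b 0 1) * a 1 0) = 1 := by
    have h2 := congrArg ψ hc1
    simpa [hcdef, map_sub, map_add, map_mul, hψ, hzker] using h2
  by_contra hno
  push_neg at hno
  have hmem : ∀ i j, a i j ∈ IsLocalRing.maximalIdeal R₁ := fun i j => hno i j
  have hone : (1 : R₁) ∈ IsLocalRing.maximalIdeal R₁ := by
    rw [← hψc]
    refine Ideal.sub_mem _ (Ideal.add_mem _ ?_ ?_) (Ideal.add_mem _ ?_ ?_)
    · exact Ideal.mul_mem_right _ _ (hmem 0 0)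
    · exact Ideal.mul_mem_left _ _ (hmem 1 1)
    · exact Ideal.mul_mem_right _ _ (hmem 0 1)
    · exact Ideal.mul_mem_left _ _ (hmem 1 0)
  exact (Ideal.ne_top_iff_one _).mp (IsLocalRing.maximalIdeal.isMaximal R₁).ne_top hone
end

section
/- For a free module E of rank 2 over a commutative ring, the canonical map φ_E : E* ⊗ Λ²E → E defined by ℓ ⊗ (s₁∧s₂) ↦ ℓ(s₂)s₁ − ℓ(s₁)s₂ is an isomorphism. -/
/-!
STATEMENT 3. For a free module `E` of rank 2 over a commutative ring, the canonical map
`φ_E : E* ⊗ Λ²E → E`, `ℓ ⊗ (s₁∧s₂) ↦ ℓ(s₂)s₁ − ℓ(s₁)s₂`, is an isomorphism.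
-/

open TensorProduct

/-- The wedge `s ∧ t` as an element of the second exterior power `⋀[R]^2 M`. -/
def wedge (R M : Type*) [CommRing R] [AddCommGroup M] [Module R M] (s t : M) :
    ⋀[R]^2 M :=
  ⟨ExteriorAlgebra.ιMulti R 2 ![s, t], ExteriorAlgebra.ιMulti_range R 2 ⟨![s, t], rfl⟩⟩

lemma wedge_coe {R M : Type*} [CommRing R] [AddCommGroup M] [Module R M] (s t : M) :
    (wedge R M s t : ExteriorAlgebra R M)
      = ExteriorAlgebra.ι R s * ExteriorAlgebra.ι R t := by
  show ExteriorAlgebra.ιMulti R 2 ![s, t] = _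
  simp [ExteriorAlgebra.ιMulti_apply, List.ofFn_succ]

lemma wedge_repr {R M : Type*} [CommRing R] [AddCommGroup M] [Module R M]
    (b : Module.Basis (Fin 2) R M) (s t : M) :
    wedge R M s t
      = (b.repr s 0 * b.repr t 1 - b.repr s 1 * b.repr t 0) • wedge R M (b 0) (b 1) := by
  apply Subtype.ext
  push_cast [wedge_coe]
  nth_rewrite 1 [← b.sum_repr s, ← b.sum_repr t]
  rw [Fin.sum_univ_two, Fin.sum_univ_two]
  simp only [map_add, map_smul, mul_add, add_mul, smul_mul_assoc, mul_smul_comm,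
    ExteriorAlgebra.ι_sq_zero, smul_zero]
  rw [show ExteriorAlgebra.ι R (b 1) * ExteriorAlgebra.ι R (b 0)
      = - (ExteriorAlgebra.ι R (b 0) * ExteriorAlgebra.ι R (b 1)) from
    eq_neg_of_add_eq_zero_right (ExteriorAlgebra.ι_add_mul_swap _ _)]
  module

theorem phi_bijective_of_rank_two
    {R M : Type*} [CommRing R] [AddCommGroup M] [Module R M]
    (b : Module.Basis (Fin 2) R M)
    (φ : Module.Dual R M ⊗[R] (⋀[R]^2 M) →ₗ[R] M)
    (hφ : ∀ (ℓ : Module.Dual R M) (s t : M),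
      φ (ℓ ⊗ₜ[R] wedge R M s t) = ℓ t • s - ℓ s • t) :
    Function.Bijective φ := by
  set w := wedge R M (b 0) (b 1) with hw
  set ψ : M →ₗ[R] Module.Dual R M ⊗[R] (⋀[R]^2 M) :=
    b.constr R ![b.dualBasis 1 ⊗ₜ[R] w, -(b.dualBasis 0 ⊗ₜ[R] w)] with hψ
  have hφψ : ∀ i, φ (ψ (b i)) = b i := by
    rw [Fin.forall_fin_two]
    constructor
    · simp only [hψ, Module.Basis.constr_basis, Matrix.cons_val_zero, hw, hφ]
      simp [Module.Basis.dualBasis_apply_self]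
    · simp only [hψ, Module.Basis.constr_basis, Matrix.cons_val_one, Matrix.head_cons, Matrix.cons_val_zero, hw]
      rw [map_neg φ, hφ]
      simp [Module.Basis.dualBasis_apply_self]
  have key : ∀ (ℓ : Module.Dual R M) (s t : M),
      ψ (ℓ t • s - ℓ s • t) = ℓ ⊗ₜ[R] wedge R M s t := by
    intro ℓ s t
    have hψap : ∀ v : M, ψ v = b.repr v 0 • (b.dualBasis 1 ⊗ₜ[R] w)
        + b.repr v 1 • (-(b.dualBasis 0 ⊗ₜ[R] w)) := by
      intro v
      rw [hψ, Module.Basis.constr_apply_fintype, Fin.sum_univ_two]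
      rfl
    have hℓ : ℓ = ℓ (b 0) • b.dualBasis 0 + ℓ (b 1) • b.dualBasis 1 := by
      apply b.dualBasis.ext_elem
      intro i
      fin_cases i <;> simp [Module.Basis.dualBasis_repr]
    have hℓs : ∀ v : M, ℓ v = ℓ (b 0) * b.repr v 0 + ℓ (b 1) * b.repr v 1 := by
      intro v
      conv_lhs => rw [← b.sum_repr v]
      rw [Fin.sum_univ_two]
      simp [mul_comm]
    rw [hψap, wedge_repr b s t]
    conv_rhs => rw [hℓ]
    simp only [map_sub, map_smul, Finsupp.coe_sub, Finsupp.coe_smul, Pi.sub_apply,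
      Pi.smul_apply, smul_eq_mul, hℓs s, hℓs t, add_tmul, ← smul_tmul', smul_neg,
      tmul_smul, ← hw]
    module
  constructor
  · -- injectivity: `ψ ∘ φ = id`
    have hid : ∀ x : Module.Dual R M ⊗[R] (⋀[R]^2 M), ψ (φ x) = x := by
      intro x
      induction x with
      | zero => simp
      | add x y hx hy => simp [map_add, hx, hy]
      | tmul ℓ z =>
        obtain ⟨z, hz⟩ := z
        have hz' : z ∈ Submodule.span R (Set.range (ExteriorAlgebra.ιMulti R 2 (M := M))) := by
          rw [ExteriorAlgebra.ιMulti_span_fixedDegree]; exact hz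
        revert hz
        induction hz' using Submodule.span_induction with
        | mem y hy =>
          intro hz
          obtain ⟨v, rfl⟩ := hy
          have hv : ![v 0, v 1] = v := by
            funext i; fin_cases i <;> rfl
          have h2 : (⟨ExteriorAlgebra.ιMulti R 2 v, hz⟩ : ⋀[R]^2 M)
              = wedge R M (v 0) (v 1) := by
            apply Subtype.ext
            show _ = ExteriorAlgebra.ιMulti R 2 ![v 0, v 1]
            rw [hv]
          rw [h2, hφ, key]
        | zero =>
          intro hz
          have h2 : (⟨(0 : ExteriorAlgebra R M), hz⟩ : ⋀[R]^2 M) = 0 := rfl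
          rw [h2, tmul_zero]; simp
        | add y z hy hz2 hy' hz'' =>
          intro hmem
          have hy0 : y ∈ ⋀[R]^2 M := by
            rw [← ExteriorAlgebra.ιMulti_span_fixedDegree]; exact hy
          have hz0 : z ∈ ⋀[R]^2 M := by
            rw [← ExteriorAlgebra.ιMulti_span_fixedDegree]; exact hz2
          have h2 : (⟨y + z, hmem⟩ : ⋀[R]^2 M) = ⟨y, hy0⟩ + ⟨z, hz0⟩ := rfl
          rw [h2, tmul_add, map_add, map_add, hy' hy0, hz'' hz0]
        | smul c y hy hy' =>
          intro hmem
          have hy0 : y ∈ ⋀[R]^2 M := by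
            rw [← ExteriorAlgebra.ιMulti_span_fixedDegree]; exact hy
          have h2 : (⟨c • y, hmem⟩ : ⋀[R]^2 M) = c • (⟨y, hy0⟩ : ⋀[R]^2 M) := rfl
          rw [h2, tmul_smul, map_smul, map_smul, hy' hy0]
    exact Function.LeftInverse.injective hid
  · -- surjectivity
    have hcomp : φ.comp ψ = LinearMap.id := b.ext fun i => by simpa using hφψ i
    exact fun m => ⟨ψ m, LinearMap.congr_fun hcomp m⟩
end

section
/- Let E be a free module of rank 2 over a commutative ring S, L₀ and L₁ free modules of rank 1, ε = ε₁ ⊕ ε₂ : E → L₀³⊗L₁ ⊕ L₁ a module map, and a : L₀ ≅ Λ²E an isomorphism. Define f : L₀⁻²⊗L₁⁻¹ → E as the composite (−ε₁ᵗ ⊗ a) followed by the canonical map φ_E : E*⊗Λ²E → E. Then Λ²ε ∘ a = ε₂ ∘ f as maps L₀ → Λ²(L₀³L₁ ⊕ L₁) ≅ L₀³L₁² (equivalently: in local trivializing bases, if ε has matrix (εᵢⱼ) then ε₂∘f is multiplication by det(εᵢⱼ)). -/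
/-!
STATEMENT 5 (determinant lemma).  `E` free of rank 2 over a commutative ring `S`,
`L₀`, `L₁` free of rank 1; `ε = ε₁ ⊕ ε₂ : E → L₀³L₁ ⊕ L₁`; `a : L₀ ≅ Λ²E`;
`f := φ_E ∘ (−ε₁ᵗ ⊗ a)`. Then `Λ²ε ∘ a = ε₂ ∘ f`.  In trivializing bases (which is
the formulation the statement itself declares equivalent), with the trivializations
of `L₀`, `L₁` chosen so that `a` sends the generator of `L₀` to `b 0 ∧ b 1`, the
components `ε₁, ε₂ : E → S` are dual vectors, `f` is the element
`φ_E ((−ε₁) ⊗ (b 0 ∧ b 1)) ∈ E`, `Λ²ε ∘ a` is multiplication by `det (εᵢⱼ)`, and the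
claim reads `ε₂ (f) = det (εᵢⱼ)` where `εᵢⱼ` is the matrix of `ε` in the basis `b`.
-/

open TensorProduct

theorem det_lemma
    {S E : Type*} [CommRing S] [AddCommGroup E] [Module S E]
    (b : Module.Basis (Fin 2) S E)
    (ε₁ ε₂ : E →ₗ[S] S)
    (φ : Module.Dual S E ⊗[S] (⋀[S]^2 E) →ₗ[S] E)
    (hφ : ∀ (ℓ : Module.Dual S E) (s t : E),
      φ (ℓ ⊗ₜ[S] wedge S E s t) = ℓ t • s - ℓ s • t) :
    ε₂ (φ ((-ε₁) ⊗ₜ[S] wedge S E (b 0) (b 1))) =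
      Matrix.det !![ε₁ (b 0), ε₁ (b 1); ε₂ (b 0), ε₂ (b 1)] := by
  rw [hφ]
  simp [Matrix.det_fin_two]
  ring
end

section
/- Combinatorial core of stability: with N, n, J₁, J₂ as above, there exist r ≥ 1 and integers (m₁,…,m_N) with 0 ≤ mⱼ ≤ Nr, mⱼ = Nr exactly on a set J̃₁ ⊇ J₁, mⱼ = 0 exactly on a set J̃₂ ⊇ J₂, Σⱼ mⱼ = Nnr, and |J̃₁| + |J̃₂| < N, if and only if |J₁| < n and |J₂| < N−n. -/
/-!
STATEMENT 13 (combinatorial core of stability).  `N ≥ 1`, `0 < n < N`,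
`J₁, J₂ ⊆ {1,…,N}` disjoint.  There exist `r ≥ 1` and `(m₁,…,m_N)` with
`0 ≤ mⱼ ≤ Nr`, `mⱼ = Nr` exactly on a set `J̃₁ ⊇ J₁`, `mⱼ = 0` exactly on a set
`J̃₂ ⊇ J₂`, `Σⱼ mⱼ = Nnr`, and `|J̃₁| + |J̃₂| < N`, iff `|J₁| < n` and
`|J₂| < N − n`.
-/

theorem stability_combinatorics
    (N n : ℕ) (hN : 1 ≤ N) (hn0 : 0 < n) (hnN : n < N)
    (J₁ J₂ : Finset (Fin N)) (hdisj : Disjoint J₁ J₂) :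
    (∃ r : ℕ, 1 ≤ r ∧ ∃ m : Fin N → ℕ,
      (∀ j, m j ≤ N * r) ∧
      J₁ ⊆ Finset.univ.filter (fun j => m j = N * r) ∧
      J₂ ⊆ Finset.univ.filter (fun j => m j = 0) ∧
      ∑ j, m j = N * n * r ∧
      (Finset.univ.filter (fun j => m j = N * r)).card
        + (Finset.univ.filter (fun j => m j = 0)).card < N) ↔
    (J₁.card < n ∧ J₂.card < N - n) := by
  constructor
  · rintro ⟨r, hr, m, hm, hJ1, hJ2, hsum, hcard⟩
    set A := Finset.univ.filter (fun j => m j = N * r) with hAdef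
    set B := Finset.univ.filter (fun j => m j = 0) with hBdef
    have hNr : 0 < N * r := Nat.mul_pos hN hr
    have hBA : B ⊆ Finset.univ \ A := by
      intro j hj
      simp only [hBdef, Finset.mem_filter] at hj
      simp only [Finset.mem_sdiff, Finset.mem_univ, true_and, hAdef, Finset.mem_filter]
      omega
    set R := (Finset.univ \ A) \ B with hRdef
    have hAcard : (Finset.univ \ A).card = N - A.card := by
      rw [Finset.card_sdiff_of_subset (Finset.subset_univ A)]
      simp
    have hRcard : R.card = N - A.card - B.card := by
      rw [hRdef, Finset.card_sdiff_of_subset hBA, hAcard]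
    have hAle : A.card ≤ N := by
      simpa using Finset.card_le_card (Finset.subset_univ A)
    have hR1 : 1 ≤ R.card := by omega
    -- split the sum
    have hsplit1 : ∑ j ∈ Finset.univ \ A, m j + ∑ j ∈ A, m j = ∑ j, m j :=
      Finset.sum_sdiff (Finset.subset_univ A)
    have hsplit2 : ∑ j ∈ R, m j + ∑ j ∈ B, m j = ∑ j ∈ Finset.univ \ A, m j :=
      Finset.sum_sdiff hBA
    have hsumA : ∑ j ∈ A, m j = A.card * (N * r) := by
      rw [Finset.sum_congr rfl (fun j hj => by
        simp only [hAdef, Finset.mem_filter] at hj; exact hj.2)]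
      simp [Finset.sum_const, mul_comm]
    have hsumB : ∑ j ∈ B, m j = 0 := by
      apply Finset.sum_eq_zero
      intro j hj
      simp only [hBdef, Finset.mem_filter] at hj
      exact hj.2
    have hRlb : ∀ j ∈ R, 1 ≤ m j := by
      intro j hj
      simp only [hRdef, Finset.mem_sdiff, hBdef, Finset.mem_filter, Finset.mem_univ,
        true_and] at hj
      omega
    have hRub : ∀ j ∈ R, m j ≤ N * r - 1 := by
      intro j hj
      simp only [hRdef, Finset.mem_sdiff, hAdef, hBdef, Finset.mem_filter, Finset.mem_univ,
        true_and] at hj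
      have := hm j
      omega
    have hRsum_lb : R.card * 1 ≤ ∑ j ∈ R, m j := by
      simpa [smul_eq_mul] using Finset.card_nsmul_le_sum R m 1 hRlb
    have hRsum_ub : ∑ j ∈ R, m j ≤ R.card * (N * r - 1) := by
      simpa [smul_eq_mul] using Finset.sum_le_card_nsmul R m (N * r - 1) hRub
    have htotal : A.card * (N * r) + ∑ j ∈ R, m j = n * (N * r) := by
      have : N * n * r = n * (N * r) := by ring
      omega
    have hAn : A.card < n := by
      have h1 : A.card * (N * r) < n * (N * r) := by omega
      exact Nat.lt_of_mul_lt_mul_right h1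
    have hRstrict : ∑ j ∈ R, m j < R.card * (N * r) := by
      have : R.card * (N * r - 1) < R.card * (N * r) :=
        Nat.mul_lt_mul_of_pos_left (by omega) (by omega)
      omega
    have hBn : n < A.card + R.card := by
      have h1 : n * (N * r) < (A.card + R.card) * (N * r) := by
        rw [add_mul]; omega
      exact Nat.lt_of_mul_lt_mul_right h1
    have hcard1 : J₁.card ≤ A.card := Finset.card_le_card hJ1
    have hcard2 : J₂.card ≤ B.card := Finset.card_le_card hJ2
    constructor
    · omega
    · omega
  · rintro ⟨h1, h2⟩
    set a := J₁.card with hadef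
    set b := J₂.card with hbdef
    set k := N - a - b with hkdef
    have hba : a + b < N := by omega
    have hk1 : 1 ≤ k := by omega
    have hna : 0 < n - a := by omega
    have hnak : n - a < k := by omega
    refine ⟨k, hk1, fun j => if j ∈ J₁ then N * k else if j ∈ J₂ then 0 else N * (n - a),
      ?_, ?_, ?_, ?_, ?_⟩
    · intro j
      by_cases hj1 : j ∈ J₁ <;> by_cases hj2 : j ∈ J₂ <;>
        simp [hj1, hj2, Nat.mul_le_mul_left, Nat.le_of_lt hnak]
    · intro j hj
      simp [hj]
    · intro j hj
      have hj1 : j ∉ J₁ := Finset.disjoint_right.mp hdisj hj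
      simp [hj, hj1]
    · -- the sum
      have hsplit1 : ∑ j ∈ Finset.univ \ J₁, (if j ∈ J₁ then N * k else if j ∈ J₂ then 0 else N * (n - a))
          + ∑ j ∈ J₁, (if j ∈ J₁ then N * k else if j ∈ J₂ then 0 else N * (n - a))
          = ∑ j, (if j ∈ J₁ then N * k else if j ∈ J₂ then 0 else N * (n - a)) :=
        Finset.sum_sdiff (Finset.subset_univ J₁)
      have hJ2sub : J₂ ⊆ Finset.univ \ J₁ := by
        intro j hj
        simp [Finset.disjoint_right.mp hdisj hj]
      have hsplit2 : ∑ j ∈ (Finset.univ \ J₁) \ J₂, (if j ∈ J₁ then N * k else if j ∈ J₂ then 0 else N * (n - a))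
          + ∑ j ∈ J₂, (if j ∈ J₁ then N * k else if j ∈ J₂ then 0 else N * (n - a))
          = ∑ j ∈ Finset.univ \ J₁, (if j ∈ J₁ then N * k else if j ∈ J₂ then 0 else N * (n - a)) :=
        Finset.sum_sdiff hJ2sub
      have hs1 : ∑ j ∈ J₁, (if j ∈ J₁ then N * k else if j ∈ J₂ then 0 else N * (n - a))
          = a * (N * k) := by
        have he : ∑ j ∈ J₁, (if j ∈ J₁ then N * k else if j ∈ J₂ then 0 else N * (n - a))
            = ∑ _j ∈ J₁, (N * k) := Finset.sum_congr rfl (fun j hj => by simp [hj])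
        rw [he, Finset.sum_const, smul_eq_mul]
      have hs2 : ∑ j ∈ J₂, (if j ∈ J₁ then N * k else if j ∈ J₂ then 0 else N * (n - a)) = 0 := by
        apply Finset.sum_eq_zero
        intro j hj
        simp [hj, Finset.disjoint_right.mp hdisj hj]
      have hs3 : ∑ j ∈ (Finset.univ \ J₁) \ J₂, (if j ∈ J₁ then N * k else if j ∈ J₂ then 0 else N * (n - a))
          = k * (N * (n - a)) := by
        have he : ∑ j ∈ (Finset.univ \ J₁) \ J₂, (if j ∈ J₁ then N * k else if j ∈ J₂ then 0 else N * (n - a))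
            = ∑ _j ∈ (Finset.univ \ J₁) \ J₂, (N * (n - a)) := by
          refine Finset.sum_congr rfl (fun j hj => ?_)
          simp only [Finset.mem_sdiff, Finset.mem_univ, true_and] at hj
          simp [hj.1, hj.2]
        have hc : ((Finset.univ \ J₁) \ J₂).card = k := by
          rw [Finset.card_sdiff_of_subset hJ2sub, Finset.card_sdiff_of_subset (Finset.subset_univ J₁)]
          simp [hkdef, hadef, hbdef]
        rw [he, Finset.sum_const, smul_eq_mul, hc]
      have hfin : a * (N * k) + k * (N * (n - a)) = N * n * k := by
        have hc : a + (n - a) = n := by omega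
        calc a * (N * k) + k * (N * (n - a)) = N * (a + (n - a)) * k := by ring
          _ = N * n * k := by rw [hc]
      show ∑ j, (if j ∈ J₁ then N * k else if j ∈ J₂ then 0 else N * (n - a)) = N * n * k
      omega
    · -- the cardinality condition
      have hA : Finset.univ.filter (fun j => (if j ∈ J₁ then N * k else if j ∈ J₂ then 0 else N * (n - a)) = N * k) = J₁ := by
        ext j
        simp only [Finset.mem_filter, Finset.mem_univ, true_and]
        by_cases hj1 : j ∈ J₁
        · simp [hj1]
        · by_cases hj2 : j ∈ J₂
          · rw [if_neg hj1, if_pos hj2]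
            simp only [hj1, iff_false]
            have : 0 < N * k := Nat.mul_pos hN hk1
            omega
          · rw [if_neg hj1, if_neg hj2]
            simp only [hj1, iff_false]
            have : N * (n - a) < N * k := Nat.mul_lt_mul_of_pos_left hnak (by omega)
            omega
      have hB : Finset.univ.filter (fun j => (if j ∈ J₁ then N * k else if j ∈ J₂ then 0 else N * (n - a)) = 0) = J₂ := by
        ext j
        simp only [Finset.mem_filter, Finset.mem_univ, true_and]
        by_cases hj1 : j ∈ J₁
        · rw [if_pos hj1]
          simp only [Finset.disjoint_left.mp hdisj hj1, iff_false]
          have : 0 < N * k := Nat.mul_pos hN hk1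
          omega
        · by_cases hj2 : j ∈ J₂
          · simp [hj1, hj2]
          · rw [if_neg hj1, if_neg hj2]
            simp only [hj2, iff_false]
            have : 0 < N * (n - a) := Nat.mul_pos hN hna
            omega
      rw [hA, hB]
      omega
end

section
/- Local model of the μ constructed in the Smith-form lemma: let R be a commutative ring, ζ ∈ R a non-zero-divisor, and φ = ((φ₁₁,φ₁₂),(φ₂₁,φ₂₂)) a 2×2 matrix over R with det φ = ζ. Suppose φᵢⱼ = aᵢⱼ + ζbᵢⱼ where each aᵢⱼ lies in a subring mapping isomorphically onto R/(ζ), a₁₁a₂₂ = a₁₂a₂₁, and a₁₁ is a unit. Then with P = ((1,0),(a₂₁,−a₁₁)), the matrix Pφ has second row divisible by ζ, and Pφ = diag(1,ζ)·Q⁻¹ for some invertible 2×2 matrix Q⁻¹ over R. -/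
/-!
STATEMENT 19 (local model of the row reduction in the Smith-form lemma).
`R` a commutative ring, `ζ ∈ R` a non-zero-divisor, `φ` a `2×2` matrix over `R`
with `det φ = ζ`, `φᵢⱼ = aᵢⱼ + ζ bᵢⱼ` where the `aᵢⱼ` lie in a subring mapping
isomorphically onto `R/(ζ)`, `a₁₁a₂₂ = a₁₂a₂₁`, and `a₁₁` is a unit.  Then with
`P = ((1,0),(a₂₁,−a₁₁))`, the matrix `Pφ` has second row divisible by `ζ`, and
`Pφ = diag(1,ζ)·Q⁻¹` for some invertible matrix `Q⁻¹`.
-/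

theorem smith_form_local_model
    {R : Type*} [CommRing R]
    (ζ : R) (hζ : ζ ∈ nonZeroDivisors R)
    (φ : Matrix (Fin 2) (Fin 2) R) (hdet : φ.det = ζ)
    (a b : Fin 2 → Fin 2 → R)
    (hab : ∀ i j, φ i j = a i j + ζ * b i j)
    (S : Subring R) (haS : ∀ i j, a i j ∈ S)
    (hiso : Function.Bijective ((Ideal.Quotient.mk (Ideal.span {ζ})).comp S.subtype))
    (h0 : a 0 0 * a 1 1 = a 0 1 * a 1 0)
    (hu : IsUnit (a 0 0)) :
    (∃ c₁ c₂ : R,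
      ((!![1, 0; a 1 0, -(a 0 0)] : Matrix (Fin 2) (Fin 2) R) * φ) 1 0 = ζ * c₁ ∧
      ((!![1, 0; a 1 0, -(a 0 0)] : Matrix (Fin 2) (Fin 2) R) * φ) 1 1 = ζ * c₂) ∧
    (∃ Qinv : Matrix (Fin 2) (Fin 2) R, IsUnit Qinv ∧
      (!![1, 0; a 1 0, -(a 0 0)] : Matrix (Fin 2) (Fin 2) R) * φ =
        Matrix.diagonal ![1, ζ] * Qinv) := by
  set c₁ : R := a 1 0 * b 0 0 - a 0 0 * b 1 0 with hc₁
  set c₂ : R := a 1 0 * b 0 1 - a 0 0 * b 1 1 with hc₂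
  have h1 : ((!![1, 0; a 1 0, -(a 0 0)] : Matrix (Fin 2) (Fin 2) R) * φ) 1 0 = ζ * c₁ := by
    simp [Matrix.mul_apply, Fin.sum_univ_two, hab, hc₁]
    ring
  have h2 : ((!![1, 0; a 1 0, -(a 0 0)] : Matrix (Fin 2) (Fin 2) R) * φ) 1 1 = ζ * c₂ := by
    simp [Matrix.mul_apply, Fin.sum_univ_two, hab, hc₂]
    linear_combination -h0
  refine ⟨⟨c₁, c₂, h1, h2⟩, ?_⟩
  set Q : Matrix (Fin 2) (Fin 2) R := !![φ 0 0, φ 0 1; c₁, c₂] with hQ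
  have hPφ : (!![1, 0; a 1 0, -(a 0 0)] : Matrix (Fin 2) (Fin 2) R) * φ =
      Matrix.diagonal ![1, ζ] * Q := by
    ext i j
    fin_cases i <;> fin_cases j <;>
      simp [Matrix.mul_apply, Fin.sum_univ_two, Matrix.diagonal, hQ] <;>
      simp_all [Matrix.mul_apply, Fin.sum_univ_two]
  have hdetPφ : ((!![1, 0; a 1 0, -(a 0 0)] : Matrix (Fin 2) (Fin 2) R) * φ).det =
      -(a 0 0) * ζ := by
    rw [Matrix.det_mul, hdet, Matrix.det_fin_two_of]
    ring
  have hdQ : ζ * Q.det = ζ * (-(a 0 0)) := by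
    have := hdetPφ
    rw [hPφ, Matrix.det_mul, Matrix.det_diagonal] at this
    simp [Fin.prod_univ_two] at this
    linear_combination this
  have hdQ' : Q.det = -(a 0 0) := by
    exact mul_cancel_left_mem_nonZeroDivisors hζ |>.mp hdQ
  refine ⟨Q, ?_, hPφ⟩
  rw [Matrix.isUnit_iff_isUnit_det, hdQ']
  exact hu.neg
end
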